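/- arXiv:1702.04502 — 3 statements merged into one kernel-verified Lean document; each statement's English description precedes it below -/
import Mathlib

section
/- The B-spline basis functions of degree p associated with the knot vector k 0, …, k (n+p) form a partition of unity on the interior knot span: for every s ∈ ℝ with k p ≤ s < k n, one has ∑_{i=0}^{n-1} B^{(i,p)}(s) = 1. -/
/-- Interpolation factor τ(i,q,s) in the Cox–de Boor recursion. -/
noncomputable def coxTau (k : ℕ → ℝ) (i q : ℕ) (s : ℝ) : ℝ :=
  if k (i + q) ≠ k i then (s - k i) / (k (i + q) - k i) else 0

/-- Interpolation factor σ(i,q,s) in the Cox–de Boor recursion. -/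
noncomputable def coxSigma (k : ℕ → ℝ) (i q : ℕ) (s : ℝ) : ℝ :=
  if k (i + q + 1) ≠ k (i + 1) then (k (i + q + 1) - s) / (k (i + q + 1) - k (i + 1)) else 0

/-- The B-spline basis function `Bspline k p i` of degree `p` with index `i`
associated with the knot vector `k`, defined by the Cox–de Boor recursion. -/
noncomputable def Bspline (k : ℕ → ℝ) : ℕ → ℕ → ℝ → ℝ
  | 0, i, s => if k i ≤ s ∧ s < k (i + 1) then 1 else 0
  | q + 1, i, s =>
      coxTau k i (q + 1) s * Bspline k q i s +
      coxSigma k i (q + 1) s * Bspline k q (i + 1) s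

/-- B-splines vanish outside the span of their supporting knots. -/
lemma Bspline_support (k : ℕ → ℝ) (hk : ∀ j, k j ≤ k (j + 1)) :
    ∀ q i (s : ℝ), (s < k i ∨ k (i + q + 1) ≤ s) → Bspline k q i s = 0 := by
  have hmono : Monotone k := monotone_nat_of_le_succ hk
  intro q
  induction q with
  | zero =>
    intro i s h
    simp only [Bspline]
    rw [if_neg]
    rintro ⟨ha, hb⟩
    rcases h with h | h
    · linarith
    · have : k (i + 0 + 1) = k (i + 1) := by norm_num
      linarith
  | succ q ih =>
    intro i s h
    have h1 : Bspline k q i s = 0 := by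
      apply ih
      rcases h with h | h
      · exact Or.inl h
      · exact Or.inr (le_trans (hmono (by omega)) h)
    have h2 : Bspline k q (i + 1) s = 0 := by
      apply ih
      rcases h with h | h
      · exact Or.inl (lt_of_lt_of_le h (hmono (by omega)))
      · refine Or.inr (le_of_eq_of_le ?_ h)
        congr 1
        omega
    simp [Bspline, h1, h2]

lemma coxTau_add_coxSigma (k : ℕ → ℝ) (q i : ℕ) (s : ℝ)
    (hne : k (i + 1 + (q + 1)) ≠ k (i + 1)) :
    coxTau k (i + 1) (q + 1) s + coxSigma k i (q + 1) s = 1 := by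
  have hidx : i + (q + 1) + 1 = i + 1 + (q + 1) := by omega
  rw [coxTau, coxSigma, if_pos hne, hidx, if_pos hne, ← add_div]
  rw [show s - k (i + 1) + (k (i + 1 + (q + 1)) - s) = k (i + 1 + (q + 1)) - k (i + 1) by ring]
  exact div_self (sub_ne_zero.2 hne)

lemma bspline_sum_aux (n p : ℕ) (hn : 1 ≤ n) (k : ℕ → ℝ)
    (hk : ∀ j, k j ≤ k (j + 1)) (s : ℝ) (h1 : k p ≤ s) (h2 : s < k n) :
    ∀ q, q ≤ p → ∑ i ∈ Finset.range (n + p - q), Bspline k q i s = 1 := by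
  have hmono : Monotone k := monotone_nat_of_le_succ hk
  intro q
  induction q with
  | zero =>
    intro _
    classical
    set P : ℕ → Prop := fun i => k i ≤ s with hP
    set i₀ := Nat.findGreatest P (n + p - 1) with hi₀
    have hPi₀ : P i₀ := Nat.findGreatest_spec (show p ≤ n + p - 1 by omega) (show P p from h1)
    have hle : i₀ ≤ n + p - 1 := Nat.findGreatest_le _
    have hlt : s < k (i₀ + 1) := by
      by_cases hc : i₀ + 1 ≤ n + p - 1
      · have := Nat.findGreatest_is_greatest (P := P) (n := n + p - 1)
          (k := i₀ + 1) (by omega) hc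
        exact lt_of_not_ge this
      · have : i₀ + 1 = n + p := by omega
        rw [this]
        exact lt_of_lt_of_le h2 (hmono (by omega))
    rw [Finset.sum_eq_single_of_mem i₀ (Finset.mem_range.2 (by omega))]
    · simp only [Bspline]
      exact if_pos ⟨hPi₀, hlt⟩
    · intro b _ hb
      simp only [Bspline]
      rw [if_neg]
      rintro ⟨ha, hbb⟩
      rcases lt_or_gt_of_ne hb with hlt' | hgt
      · have : k (b + 1) ≤ k i₀ := hmono (by omega)
        linarith
      · have : k (i₀ + 1) ≤ k b := hmono (by omega)
        linarith
  | succ q ih =>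
    intro hq
    have IH := ih (by omega)
    obtain ⟨m', hm'⟩ : ∃ m', n + p - (q + 1) = m' + 1 := ⟨n + p - (q + 1) - 1, by omega⟩
    have hB0 : Bspline k q 0 s = 0 := by
      apply Bspline_support k hk
      exact Or.inr (le_trans (hmono (by omega)) h1)
    have hBm : Bspline k q (m' + 1) s = 0 := by
      apply Bspline_support k hk
      refine Or.inl (lt_of_lt_of_le h2 (hmono ?_))
      omega
    rw [hm']
    simp only [Bspline]
    rw [Finset.sum_add_distrib, Finset.sum_range_succ', Finset.sum_range_succ,
      hB0, hBm, mul_zero, mul_zero, add_zero, add_zero, ← Finset.sum_add_distrib]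
    have hpt : ∀ i, coxTau k (i + 1) (q + 1) s * Bspline k q (i + 1) s +
        coxSigma k i (q + 1) s * Bspline k q (i + 1) s = Bspline k q (i + 1) s := by
      intro i
      rw [← add_mul]
      by_cases hB : Bspline k q (i + 1) s = 0
      · simp [hB]
      · rw [coxTau_add_coxSigma k q i s, one_mul]
        intro heq
        apply hB
        apply Bspline_support k hk
        rcases le_or_gt (k (i + 1)) s with hc | hc
        · exact Or.inr (le_of_eq_of_le ((congrArg k (by omega : i + 1 + q + 1 = i + 1 + (q + 1))).trans heq) hc)
        · exact Or.inl hc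
    rw [Finset.sum_congr rfl (fun i _ => hpt i)]
    have : ∑ i ∈ Finset.range m', Bspline k q (i + 1) s
        = ∑ i ∈ Finset.range (n + p - q), Bspline k q i s := by
      rw [show n + p - q = m' + 1 + 1 by omega, Finset.sum_range_succ,
        Finset.sum_range_succ', hB0, hBm, add_zero, add_zero]
    rw [this, IH]

theorem bspline_partition_of_unity (n p : ℕ) (hn : 1 ≤ n) (k : ℕ → ℝ)
    (hk : ∀ j, k j ≤ k (j + 1)) (s : ℝ) (h1 : k p ≤ s) (h2 : s < k n) :
    ∑ i ∈ Finset.range n, Bspline k p i s = 1 := by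
  have := bspline_sum_aux n p hn k hk s h1 h2 p le_rfl
  rwa [show n + p - p = n by omega] at this
end

section
/- B-splines are a special case of NURBS obtained by taking all weights to be identical: if w i = w for all 0 ≤ i ≤ n−1 with w > 0, then for every s ∈ ℝ with k p ≤ s < k n, the NURBS basis function N^i(s) := w i · B^{(i,p)}(s) / ∑_{j=0}^{n-1} w j · B^{(j,p)}(s) equals B^{(i,p)}(s) for every 0 ≤ i ≤ n−1. -/
lemma Bspline_eq_zero_of_lt (k : ℕ → ℝ) (hk : ∀ j, k j ≤ k (j + 1)) :
    ∀ (q i : ℕ) (s : ℝ), s < k i → Bspline k q i s = 0 := by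
  intro q
  induction q with
  | zero =>
    intro i s h
    simp only [Bspline, ite_eq_right_iff, one_ne_zero]
    rintro ⟨h1, _⟩; linarith
  | succ q ih =>
    intro i s h
    have hm : Monotone k := monotone_nat_of_le_succ hk
    rw [Bspline, ih i s h, ih (i + 1) s (lt_of_lt_of_le h (hm (Nat.le_succ i)))]
    ring

lemma Bspline_eq_zero_of_ge (k : ℕ → ℝ) (hk : ∀ j, k j ≤ k (j + 1)) :
    ∀ (q i : ℕ) (s : ℝ), k (i + q + 1) ≤ s → Bspline k q i s = 0 := by
  intro q
  induction q with
  | zero =>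
    intro i s h
    simp only [Bspline, ite_eq_right_iff, one_ne_zero]
    rintro ⟨_, h2⟩
    exact absurd h (not_le.mpr (lt_of_lt_of_le h2 (by simpa using le_refl (k (i+1)))))
  | succ q ih =>
    intro i s h
    have hm : Monotone k := monotone_nat_of_le_succ hk
    have h1 : k (i + q + 1) ≤ s := le_trans (hm (by omega)) h
    have h2 : k ((i + 1) + q + 1) ≤ s := le_trans (hm (by omega)) h
    rw [Bspline, ih i s h1, ih (i + 1) s h2]
    ring

lemma sum_Bspline (k : ℕ → ℝ) (hk : ∀ j, k j ≤ k (j + 1)) (q : ℕ) :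
    ∀ n : ℕ, 1 ≤ n → ∀ s : ℝ, k q ≤ s → s < k n →
      ∑ j ∈ Finset.range n, Bspline k q j s = 1 := by
  classical
  have hm : Monotone k := monotone_nat_of_le_succ hk
  induction q with
  | zero =>
    intro n hn s h1 h2
    have h0 : k 0 ≤ s := h1
    set j₀ := Nat.findGreatest (fun j => k j ≤ s) (n - 1) with hj₀
    have hspec : k j₀ ≤ s := by
      have := Nat.findGreatest_spec (P := fun j => k j ≤ s) (m := 0) (n := n - 1)
        (Nat.zero_le _) h0
      simpa [hj₀] using this
    have hle : j₀ ≤ n - 1 := Nat.findGreatest_le _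
    have hj₀n : j₀ < n := by omega
    have hnext : s < k (j₀ + 1) := by
      rcases lt_or_ge j₀ (n - 1) with h | h
      · have := Nat.findGreatest_is_greatest (Nat.lt_succ_self j₀) (by omega)
        exact lt_of_not_ge this
      · have hj : j₀ + 1 = n := by omega
        rw [hj]; exact h2
    rw [Finset.sum_eq_single j₀]
    · simp [Bspline, hspec, hnext]
    · intro b hb hne
      simp only [Bspline, ite_eq_right_iff, one_ne_zero]
      rintro ⟨hb1, hb2⟩
      rcases lt_or_gt_of_ne hne with h | h
      · have : k (b + 1) ≤ k j₀ := hm (by omega)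
        linarith
      · have : k (j₀ + 1) ≤ k b := hm (by omega)
        linarith
    · intro h
      exact absurd (Finset.mem_range.mpr hj₀n) h
  | succ q ih =>
    intro n hn s h1 h2
    obtain ⟨m, rfl⟩ : ∃ m, n = m + 1 := ⟨n - 1, by omega⟩
    have hq : k q ≤ s := le_trans (hk q) h1
    have hA0 : Bspline k q 0 s = 0 :=
      Bspline_eq_zero_of_ge k hk q 0 s (by simpa using h1)
    have hAn : Bspline k q (m + 1) s = 0 :=
      Bspline_eq_zero_of_lt k hk q (m + 1) s h2
    have split : ∑ j ∈ Finset.range (m + 1), Bspline k (q + 1) j s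
        = ∑ j ∈ Finset.range (m + 1), coxTau k j (q + 1) s * Bspline k q j s
        + ∑ j ∈ Finset.range (m + 1), coxSigma k j (q + 1) s * Bspline k q (j + 1) s := by
      rw [← Finset.sum_add_distrib]
      rfl
    rw [split,
      Finset.sum_range_succ' (fun j => coxTau k j (q + 1) s * Bspline k q j s) m,
      Finset.sum_range_succ (fun j => coxSigma k j (q + 1) s * Bspline k q (j + 1) s) m,
      hA0, hAn, mul_zero, mul_zero, add_zero, add_zero]
    have middle : ∀ j : ℕ,
        coxTau k (j + 1) (q + 1) s * Bspline k q (j + 1) s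
          + coxSigma k j (q + 1) s * Bspline k q (j + 1) s
        = Bspline k q (j + 1) s := by
      intro j
      by_cases hkk : k (j + 1 + (q + 1)) = k (j + 1)
      · have hz : Bspline k q (j + 1) s = 0 := by
          rcases lt_or_ge s (k (j + 1)) with h | h
          · exact Bspline_eq_zero_of_lt k hk q (j + 1) s h
          · refine Bspline_eq_zero_of_ge k hk q (j + 1) s ?_
            have : j + 1 + q + 1 = j + 1 + (q + 1) := by ring
            rw [this, hkk]; exact h
        rw [hz]; ring
      · have hts : coxTau k (j + 1) (q + 1) s + coxSigma k j (q + 1) s = 1 := by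
          have he : j + (q + 1) + 1 = j + 1 + (q + 1) := by ring
          simp only [coxTau, coxSigma, he, if_pos hkk]
          rw [← add_div]
          have hd : k (j + 1 + (q + 1)) - k (j + 1) ≠ 0 := sub_ne_zero.mpr hkk
          field_simp
          ring
        calc coxTau k (j + 1) (q + 1) s * Bspline k q (j + 1) s
              + coxSigma k j (q + 1) s * Bspline k q (j + 1) s
            = (coxTau k (j + 1) (q + 1) s + coxSigma k j (q + 1) s)
                * Bspline k q (j + 1) s := by ring
          _ = Bspline k q (j + 1) s := by rw [hts, one_mul]
    rw [← Finset.sum_add_distrib]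
    have : ∑ j ∈ Finset.range m,
        (coxTau k (j + 1) (q + 1) s * Bspline k q (j + 1) s
          + coxSigma k j (q + 1) s * Bspline k q (j + 1) s)
        = ∑ j ∈ Finset.range m, Bspline k q (j + 1) s :=
      Finset.sum_congr rfl (fun j _ => middle j)
    rw [this]
    have hsum : ∑ j ∈ Finset.range (m + 1), Bspline k q j s = 1 :=
      ih (m + 1) (by omega) s hq h2
    rw [Finset.sum_range_succ' (fun j => Bspline k q j s) m, hA0, add_zero] at hsum
    exact hsum

theorem nurbs_equal_weights_eq_bspline (n p : ℕ) (hn : 1 ≤ n) (k : ℕ → ℝ)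
    (hk : ∀ j, k j ≤ k (j + 1)) (w : ℕ → ℝ) (c : ℝ) (hc : 0 < c)
    (hw : ∀ i < n, w i = c) (i : ℕ) (hi : i < n)
    (s : ℝ) (h1 : k p ≤ s) (h2 : s < k n) :
    w i * Bspline k p i s / ∑ j ∈ Finset.range n, w j * Bspline k p j s
      = Bspline k p i s := by
  have hsum : ∑ j ∈ Finset.range n, Bspline k p j s = 1 :=
    sum_Bspline k hk p n hn s h1 h2
  have : ∑ j ∈ Finset.range n, w j * Bspline k p j s = c := by
    rw [Finset.sum_congr rfl (fun j hj => by
      rw [hw j (Finset.mem_range.mp hj)]), ← Finset.mul_sum, hsum, mul_one]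
  rw [this, hw i hi]
  exact mul_div_cancel_left₀ _ (ne_of_gt hc)
end

section
/- The Cauchy stress of the Stokeslet is given by the kernel 𝒯: for every x ∈ ℝ³ with x ≠ 0 and all indices a, c ∈ {1,2,3}, the Newtonian stress σ_{ac}(x) := −p(x) δ_{ac} + η (∂u_a/∂x_c (x) + ∂u_c/∂x_a (x)) of the Stokeslet fields u(x) = (1/(8πη))((x·b) x/|x|³ + b/|x|) and p(x) = (x·b)/(4π|x|³) equals −(3/(4π)) x_a x_c (x·b)/|x|⁵, i.e., σ_{ac}(x) = 𝒯_{acb}(x) b_b with 𝒯_{abc}(x) = −(3/(4π)) x_a x_b x_c/|x|⁵. -/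
open Real

/-- The Stokeslet velocity field `u(x) = (1/(8πη)) ( (x·b) x/|x|³ + b/|x| )`
associated with viscosity `η` and force vector `b`. -/
noncomputable def stokeslet (η : ℝ) (b : EuclideanSpace ℝ (Fin 3))
    (x : EuclideanSpace ℝ (Fin 3)) : EuclideanSpace ℝ (Fin 3) :=
  (1 / (8 * π * η)) • (((inner ℝ x b : ℝ) / ‖x‖ ^ 3) • x + ‖x‖⁻¹ • b)

/-- The Stokeslet pressure field `p(x) = (x·b)/(4π|x|³)`. -/
noncomputable def stokesletPressure (b x : EuclideanSpace ℝ (Fin 3)) : ℝ :=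
  (inner ℝ x b : ℝ) / (4 * π * ‖x‖ ^ 3)

local notation "E3" => EuclideanSpace ℝ (Fin 3)

lemma hasFDerivAt_norm3 (x : E3) (hx : x ≠ 0) :
    HasFDerivAt (fun y : E3 => ‖y‖) (‖x‖⁻¹ • innerSL ℝ x) x := by
  have h2 : HasFDerivAt (fun y : E3 => ‖y‖ ^ 2) (2 • innerSL ℝ x) x :=
    (hasStrictFDerivAt_norm_sq x).hasFDerivAt
  have hne : ‖x‖ ^ 2 ≠ 0 := pow_ne_zero 2 (norm_ne_zero_iff.mpr hx)
  have h := h2.sqrt hne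
  have heq : (fun y : E3 => Real.sqrt (‖y‖ ^ 2)) = fun y : E3 => ‖y‖ := by
    funext y; exact Real.sqrt_sq (norm_nonneg y)
  rw [heq] at h
  refine h.congr_fderiv ?_
  rw [Real.sqrt_sq (norm_nonneg x)]
  ext v
  simp [smul_smul]
  ring

lemma stokeslet_fderiv (η : ℝ) (hη : η ≠ 0) (b x : E3) (hx : x ≠ 0) (i j : Fin 3) :
    fderiv ℝ (fun y => stokeslet η b y i) x (EuclideanSpace.single j 1)
      = (1 / (8 * π * η)) * (b j * x i / ‖x‖ ^ 3
          + (inner ℝ x b : ℝ) * (if i = j then 1 else 0) / ‖x‖ ^ 3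
          - 3 * (inner ℝ x b : ℝ) * x i * x j / ‖x‖ ^ 5
          - b i * x j / ‖x‖ ^ 3) := by
  have hrne : ‖x‖ ≠ 0 := norm_ne_zero_iff.mpr hx
  have hr := hasFDerivAt_norm3 x hx
  have hinner : HasFDerivAt (fun y : E3 => (inner ℝ y b : ℝ)) (innerSL ℝ b) x := by
    have h := (innerSL ℝ (E := E3) b).hasFDerivAt (x := x)
    have heq : (fun y : E3 => (inner ℝ y b : ℝ)) = innerSL ℝ b := by
      funext y; exact (real_inner_comm y b).symm
    rw [heq]; exact h
  have hproj : HasFDerivAt (fun y : E3 => y i) (EuclideanSpace.proj i (𝕜 := ℝ)) x :=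
    (EuclideanSpace.proj i (𝕜 := ℝ)).hasFDerivAt
  have hr3 : HasFDerivAt (fun y : E3 => ‖y‖ ^ 3)
      (((3 : ℕ) * ‖x‖ ^ 2) • (‖x‖⁻¹ • innerSL ℝ x)) x := by
    have h := (hasDerivAt_pow 3 ‖x‖).comp_hasFDerivAt x hr
    simp only [Function.comp_def, Nat.cast_ofNat] at h ⊢
    exact h
  have hr3ne : ‖x‖ ^ 3 ≠ 0 := pow_ne_zero 3 hrne
  have hr3inv := (hasDerivAt_inv hr3ne).comp_hasFDerivAt x hr3
  have hmul := (hinner.mul hr3inv).mul hproj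
  have hinv := (hasDerivAt_inv hrne).comp_hasFDerivAt x hr
  have hinvc := hinv.mul_const (b i)
  have hsum := (hmul.add hinvc).const_mul (1 / (8 * π * η))
  have hfun : (fun y : E3 => stokeslet η b y i) =
      (fun y : E3 => 1 / (8 * π * η) * ((inner ℝ y b : ℝ) * (‖y‖ ^ 3)⁻¹ * y i + ‖y‖⁻¹ * b i)) := by
    funext y
    simp [stokeslet, PiLp.smul_apply, PiLp.add_apply, smul_eq_mul, div_eq_mul_inv]
    ring
  simp only [Function.comp_def, Pi.mul_apply, Pi.add_apply] at hsum
  rw [hfun, hsum.fderiv]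
  simp only [ContinuousLinearMap.coe_smul', ContinuousLinearMap.smul_apply,
    ContinuousLinearMap.add_apply, ContinuousLinearMap.coe_sub',
    ContinuousLinearMap.sub_apply, innerSL_apply_apply, Pi.smul_apply, smul_eq_mul,
    PiLp.proj_apply]
  have h1 : (inner ℝ x (EuclideanSpace.single j 1) : ℝ) = x j := by
    simp [EuclideanSpace.inner_single_right, real_inner_comm]
  have h2 : (inner ℝ b (EuclideanSpace.single j 1) : ℝ) = b j := by
    simp [EuclideanSpace.inner_single_right]
  have h3 : (EuclideanSpace.single j 1 : E3) i = if i = j then 1 else 0 := by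
    simp [EuclideanSpace.single_apply]
  rw [h1, h2, h3]
  by_cases hij : i = j
  · subst hij
    simp only [if_pos rfl]
    field_simp [hrne, hη, Real.pi_ne_zero]
    ring
  · simp only [if_neg hij]
    field_simp [hrne, hη, Real.pi_ne_zero]
    ring

theorem stokeslet_stress_kernel (η : ℝ) (hη : 0 < η) (b : EuclideanSpace ℝ (Fin 3))
    (x : EuclideanSpace ℝ (Fin 3)) (hx : x ≠ 0) (a c : Fin 3) :
    -(stokesletPressure b x) * (if a = c then 1 else 0) +
      η * (fderiv ℝ (fun y => stokeslet η b y a) x (EuclideanSpace.single c 1) +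
           fderiv ℝ (fun y => stokeslet η b y c) x (EuclideanSpace.single a 1))
      = -(3 / (4 * π)) * (x a * x c * (inner ℝ x b : ℝ) / ‖x‖ ^ 5) := by
  have hηne : η ≠ 0 := ne_of_gt hη
  have hrne : ‖x‖ ≠ 0 := norm_ne_zero_iff.mpr hx
  rw [stokeslet_fderiv η hηne b x hx a c, stokeslet_fderiv η hηne b x hx c a,
    stokesletPressure]
  have hδ : (if c = a then (1:ℝ) else 0) = if a = c then 1 else 0 := by
    simp [eq_comm]
  rw [hδ]
  by_cases hac : a = c
  · subst hac
    simp only [if_pos rfl]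
    field_simp [hηne, Real.pi_ne_zero, hrne]
    ring
  · simp only [if_neg hac]
    field_simp [hηne, Real.pi_ne_zero, hrne]
    ring
end
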